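/- Let E be the ideal of subsets of ℝ generated by the F_σ Lebesgue-measure-zero sets, C_E = ⟨ℝ, E, ∈⟩, and Spl = ⟨[ω]^{ℵ₀}, [ω]^{ℵ₀}, ⊏^{nsp}⟩ where a ⊏^{nsp} b iff b ⊆* a or b ⊆* ω∖a (i.e., a does not split b). Then C_E ≼_T Spl. Consequently, 𝔰 ≤ non(E) and cov(E) ≤ 𝔯, where 𝔰 = 𝔟(Spl) is the splitting number and 𝔯 = 𝔡(Spl) is the reaping number. -/

import Mathlib

open Cardinal

universe u v

/-- A set `F ⊆ X` is unbounded in the relational system `⟨X, Y, r⟩`: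
no `y ∈ Y` satisfies `r x y` for all `x ∈ F`. -/
def RUnbounded {X : Type u} {Y : Type v} (r : X → Y → Prop) (F : Set X) : Prop :=
  ¬ ∃ y : Y, ∀ x ∈ F, r x y

/-- A set `E ⊆ Y` is dominating in the relational system `⟨X, Y, r⟩`. -/
def RDominating {X : Type u} {Y : Type v} (r : X → Y → Prop) (E : Set Y) : Prop :=
  ∀ x : X, ∃ y ∈ E, r x y

/-- The unbounding number `𝔟(R)` of the relational system `⟨X, Y, r⟩`. -/
noncomputable def bNum {X : Type u} {Y : Type v} (r : X → Y → Prop) : Cardinal.{u} :=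
  sInf { c | ∃ F : Set X, RUnbounded r F ∧ c = #F }

/-- The dominating number `𝔡(R)` of the relational system `⟨X, Y, r⟩`. -/
noncomputable def dNum {X : Type u} {Y : Type v} (r : X → Y → Prop) : Cardinal.{v} :=
  sInf { c | ∃ E : Set Y, RDominating r E ∧ c = #E }

/-- Tukey connection: `R ≼_T R'`. -/
def TukeyLE {X Y X' Y' : Type*} (r : X → Y → Prop) (r' : X' → Y' → Prop) : Prop :=
  ∃ (f : X → X') (g : Y' → Y), ∀ x y', r' (f x) y' → r x (g y')

/-- `I` is an ideal of subsets of `X`. -/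
def IsIdeal {X : Type u} (I : Set (Set X)) : Prop :=
  ∅ ∈ I ∧ (∀ A ∈ I, ∀ B ⊆ A, B ∈ I) ∧ (∀ A ∈ I, ∀ B ∈ I, A ∪ B ∈ I)

/-- `add(I)`, the additivity of `I`. -/
noncomputable def addIdeal {X : Type u} (I : Set (Set X)) : Cardinal.{u} :=
  sInf { c | ∃ F ⊆ I, ⋃₀ F ∉ I ∧ c = #F }

/-- `cof(I)`, the cofinality of `I`. -/
noncomputable def cofIdeal {X : Type u} (I : Set (Set X)) : Cardinal.{u} :=
  sInf { c | ∃ D ⊆ I, (∀ A ∈ I, ∃ B ∈ D, A ⊆ B) ∧ c = #D }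

/-- `non(I)`, the uniformity of `I`. -/
noncomputable def nonIdeal {X : Type u} (I : Set (Set X)) : Cardinal.{u} :=
  sInf { c | ∃ F : Set X, F ∉ I ∧ c = #F }

/-- `cov(I)`, the covering number of `I`. -/
noncomputable def covIdeal {X : Type u} (I : Set (Set X)) : Cardinal.{u} :=
  sInf { c | ∃ C ⊆ I, ⋃₀ C = Set.univ ∧ c = #C }

/-- The ideal `E` generated by the `F_σ` Lebesgue-measure-zero subsets of `ℝ`:
`A ∈ E` iff `A` is contained in an `F_σ` set of Lebesgue measure zero. -/
def idealE : Set (Set ℝ) :=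
  { A | ∃ B : Set ℝ, (∃ F : ℕ → Set ℝ, (∀ n, IsClosed (F n)) ∧ B = ⋃ n, F n) ∧
      MeasureTheory.volume B = 0 ∧ A ⊆ B }

/-- The set `[ω]^{ℵ₀}` of infinite subsets of `ℕ`. -/
def InfSubsetT : Type :=
  { a : Set ℕ // a.Infinite }

/-- The non-splitting relation of `Spl`: `a ⊏^{nsp} b` iff `b ⊆* a` or `b ⊆* ω ∖ a`,
i.e. `a` does not split `b`. -/
def SplRel : InfSubsetT → InfSubsetT → Prop :=
  fun a b => (b.1 \ a.1).Finite ∨ (b.1 ∩ a.1).Finite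


open MeasureTheory Set
open scoped ENNReal

namespace Stmt19

/-- binary digit `n` of `x` (of its fractional part), as a Bool. -/
noncomputable def dgt (n : ℕ) (x : ℝ) : Bool := decide (⌊x * 2^(n+1)⌋ % 2 = 1)

lemma dgt_sub_int (n : ℕ) (x : ℝ) (j : ℤ) : dgt n (x - j) = dgt n x := by
  unfold dgt
  have h1 : (x - j) * 2^(n+1) = x * 2^(n+1) + ((-j * 2^(n+1) : ℤ) : ℝ) := by push_cast; ring
  rw [h1, Int.floor_add_intCast]
  have h2 : (-j : ℤ) * 2^(n+1) = 2 * (-j * 2^n) := by ring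
  rw [h2]
  have := Int.add_mul_emod_self_left (a := ⌊x * 2^(n+1)⌋) (b := 2) (c := -j * 2^n)
  rw [this]

lemma dgt_eq_testBit {L n : ℕ} (hn : n < L) {x : ℝ} (hx : 0 ≤ x) :
    dgt n x = Nat.testBit ⌊x * 2^L⌋₊ (L - 1 - n) := by
  have hx2 : (0:ℝ) ≤ x * 2^(n+1) := by positivity
  have key : x * 2^(n+1) = (x * 2^L) / ((2^(L-1-n) : ℕ) : ℝ) := by
    rw [eq_div_iff (by positivity)]
    push_cast
    rw [mul_assoc, ← pow_add]
    congr 2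
    omega
  have h2 : ⌊x * 2^(n+1)⌋₊ = ⌊x * 2^L⌋₊ / 2^(L-1-n) := by
    rw [key, Nat.floor_div_natCast]
  rw [Nat.testBit_eq_decide_div_mod_eq, ← h2]
  unfold dgt
  rw [← Int.natCast_floor_eq_floor hx2]
  apply decide_eq_decide.mpr
  constructor
  · intro h; exact_mod_cast h
  · intro h; exact_mod_cast h

/-- level of a finite constraint set -/
def LL (F : Finset ℕ) : ℕ := F.sup (· + 1)

lemma lt_LL {F : Finset ℕ} {n : ℕ} (hn : n ∈ F) : n < LL F :=
  Nat.lt_of_lt_of_le (Nat.lt_succ_self n) (Finset.le_sup (f := (· + 1)) hn)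

/-- the residues `k < 2^L` compatible with the digit constraints -/
def good (F : Finset ℕ) (g : ℕ → Bool) : Finset ℕ :=
  (Finset.range (2^(LL F))).filter (fun k => ∀ n ∈ F, k.testBit (LL F - 1 - n) = g n)

lemma card_good_le (F : Finset ℕ) (g : ℕ → Bool) :
    (good F g).card ≤ 2 ^ (LL F - F.card) := by
  classical
  set L := LL F with hL
  set P : Finset ℕ := F.image (fun n => L - 1 - n) with hP
  have hinjF : Set.InjOn (fun n => L - 1 - n) ↑F := by
    intro a ha b hb hab
    have ha' : a < L := lt_LL ha
    have hb' : b < L := lt_LL hb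
    simp only at hab
    omega
  have hPcard : P.card = F.card := Finset.card_image_of_injOn hinjF
  have hPsub : P ⊆ Finset.range L := by
    intro p hp
    simp only [hP, Finset.mem_image] at hp
    obtain ⟨n, hn, rfl⟩ := hp
    have := lt_LL hn
    simp only [Finset.mem_range]
    omega
  have hmap : ∀ k ∈ good F g, (fun (p : {x // x ∈ Finset.range L \ P}) => Nat.testBit k ↑p) ∈
      (Finset.univ : Finset ({x // x ∈ Finset.range L \ P} → Bool)) :=
    fun _ _ => Finset.mem_univ _
  have hinj : Set.InjOn (fun (k : ℕ) => (fun (p : {x // x ∈ Finset.range L \ P}) => Nat.testBit k ↑p))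
      ↑(good F g) := by
    intro k hk k' hk' hkk'
    simp only [good, Finset.coe_filter, Set.mem_setOf_eq, Finset.mem_range] at hk hk'
    apply Nat.eq_of_testBit_eq
    intro i
    by_cases hi : i < L
    · by_cases hiP : i ∈ P
      · simp only [hP, Finset.mem_image] at hiP
        obtain ⟨n, hn, rfl⟩ := hiP
        rw [hk.2 n hn, hk'.2 n hn]
      · have hmem : i ∈ Finset.range L \ P := by
          simp [Finset.mem_sdiff, Finset.mem_range, hi, hiP]
        exact congrFun hkk' ⟨i, hmem⟩
    · have h2 : (2:ℕ)^L ≤ 2^i := Nat.pow_le_pow_right (by norm_num) (by omega)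
      rw [Nat.testBit_eq_false_of_lt (lt_of_lt_of_le hk.1 h2),
        Nat.testBit_eq_false_of_lt (lt_of_lt_of_le hk'.1 h2)]
  calc (good F g).card ≤ (Finset.univ : Finset ({x // x ∈ Finset.range L \ P} → Bool)).card :=
        Finset.card_le_card_of_injOn _ hmap hinj
    _ = 2 ^ (L - F.card) := by
        rw [Finset.card_univ, Fintype.card_fun, Fintype.card_coe, Fintype.card_bool,
          Finset.card_sdiff_of_subset hPsub, Finset.card_range, hPcard]

/-- the closed set of reals in one period satisfying the digit constraints -/
noncomputable def QQ (F : Finset ℕ) (g : ℕ → Bool) : Set ℝ :=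
  ⋃ k ∈ good F g, Set.Icc ((k : ℝ) / 2^(LL F)) (((k:ℝ)+1) / 2^(LL F))

lemma isClosed_QQ (F : Finset ℕ) (g : ℕ → Bool) : IsClosed (QQ F g) :=
  Set.Finite.isClosed_biUnion (good F g).finite_toSet (fun _ _ => isClosed_Icc)

lemma volume_QQ_le (F : Finset ℕ) (g : ℕ → Bool) :
    volume (QQ F g) ≤ (2 : ℝ≥0∞)⁻¹ ^ F.card := by
  set L := LL F with hL
  set N := F.card with hN
  have hNL : N ≤ L := by
    have : F ⊆ Finset.range L := fun n hn => Finset.mem_range.mpr (lt_LL hn)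
    simpa using Finset.card_le_card this
  have h1 : volume (QQ F g) ≤ ∑ k ∈ good F g, volume
      (Set.Icc ((k : ℝ) / 2^L) (((k:ℝ)+1) / 2^L)) :=
    measure_biUnion_finset_le _ _
  have h2 : ∀ k : ℕ, volume (Set.Icc ((k : ℝ) / 2^L) (((k:ℝ)+1) / 2^L))
      = ENNReal.ofReal ((2:ℝ)^L)⁻¹ := by
    intro k
    rw [Real.volume_Icc]
    congr 1
    field_simp
    ring
  have h3 : ENNReal.ofReal ((2:ℝ)^L)⁻¹ = ((2:ℝ≥0∞)^L)⁻¹ := by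
    rw [ENNReal.ofReal_inv_of_pos (by positivity)]
    congr 1
    rw [ENNReal.ofReal_pow (by norm_num)]
    norm_num
  calc volume (QQ F g) ≤ ∑ k ∈ good F g, volume (Set.Icc ((k : ℝ) / 2^L) (((k:ℝ)+1) / 2^L)) := h1
    _ = (good F g).card * ((2:ℝ≥0∞)^L)⁻¹ := by
        rw [Finset.sum_congr rfl (fun k _ => (h2 k).trans h3), Finset.sum_const, nsmul_eq_mul]
    _ ≤ (2:ℝ≥0∞)^(L-N) * ((2:ℝ≥0∞)^L)⁻¹ := by
        gcongr
        have := card_good_le F g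
        calc ((good F g).card : ℝ≥0∞) ≤ ((2 ^ (L - N) : ℕ) : ℝ≥0∞) := by exact_mod_cast this
          _ = (2:ℝ≥0∞)^(L-N) := by push_cast; ring
    _ = (2 : ℝ≥0∞)⁻¹ ^ N := by
        rw [← ENNReal.inv_pow]
        have hsplit : (2:ℝ≥0∞)^L = 2^(L-N) * 2^N := by
          rw [← pow_add]; congr 1; omega
        have h20 : (2:ℝ≥0∞) ^ (L-N) ≠ 0 := pow_ne_zero _ (by norm_num)
        have h20' : (2:ℝ≥0∞) ^ N ≠ 0 := pow_ne_zero _ (by norm_num)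
        have h2t : (2:ℝ≥0∞) ^ (L-N) ≠ ⊤ := ENNReal.pow_ne_top (by norm_num)
        rw [hsplit, ENNReal.mul_inv (Or.inl h20) (Or.inr h20'),
          ← mul_assoc, ENNReal.mul_inv_cancel h20 h2t, one_mul]

lemma mem_QQ {x : ℝ} (hx0 : 0 ≤ x) (hx1 : x < 1) (F : Finset ℕ) (g : ℕ → Bool)
    (h : ∀ n ∈ F, dgt n x = g n) : x ∈ QQ F g := by
  set L := LL F with hL
  set k := ⌊x * 2^L⌋₊ with hk
  have hpow : (0:ℝ) < 2^L := by positivity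
  have hk2 : (k:ℝ) ≤ x * 2^L := Nat.floor_le (by positivity)
  have hk3 : x * 2^L < (k:ℝ) + 1 := Nat.lt_floor_add_one _
  have hkL : k < 2^L := by
    rw [hk, Nat.floor_lt (by positivity)]
    calc x * 2^L < 1 * 2^L := mul_lt_mul_of_pos_right hx1 hpow
      _ = ((2^L : ℕ) : ℝ) := by push_cast; ring
  have hmem : k ∈ good F g := by
    simp only [good, Finset.mem_filter, Finset.mem_range]
    refine ⟨hkL, fun n hn => ?_⟩
    rw [← dgt_eq_testBit (lt_LL hn) hx0]
    exact h n hn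
  have hIcc : x ∈ Set.Icc ((k : ℝ) / 2^(LL F)) (((k:ℝ)+1) / 2^(LL F)) := by
    constructor
    · rw [div_le_iff₀ hpow]; exact hk2
    · rw [le_div_iff₀ hpow]; exact le_of_lt hk3
  exact Set.mem_biUnion hmem hIcc


def ax (x : ℝ) : Set ℕ := {m | dgt (m/2) x = decide (m % 2 = 0)}

lemma mem_ax_iff_even {x : ℝ} {n : ℕ} : 2*n ∈ ax x ↔ dgt n x = true := by
  have h1 : (2*n)/2 = n := by omega
  have h2 : (2*n) % 2 = 0 := by omega
  simp [ax, h1, h2]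

lemma mem_ax_iff_odd {x : ℝ} {n : ℕ} : 2*n+1 ∈ ax x ↔ dgt n x = false := by
  have h1 : (2*n+1)/2 = n := by omega
  have h2 : (2*n+1) % 2 = 1 := by omega
  simp [ax, h1, h2]

lemma ax_infinite (x : ℝ) : (ax x).Infinite := by
  apply Set.infinite_of_injective_forall_mem
    (f := fun n : ℕ => if dgt n x = true then 2*n else 2*n+1)
  · intro a b hab
    simp only at hab
    split_ifs at hab <;> omega
  · intro n
    by_cases hd : dgt n x = true
    · simp only [if_pos hd]
      exact mem_ax_iff_even.mpr hd
    · simp only [if_neg hd]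
      exact mem_ax_iff_odd.mpr (by simpa using hd)

noncomputable def fx (x : ℝ) : InfSubsetT := ⟨ax x, ax_infinite x⟩

def bp (b : InfSubsetT) : Set ℕ := {n | 2*n ∈ b.1 ∨ 2*n+1 ∈ b.1}

lemma bp_infinite (b : InfSubsetT) : (bp b).Infinite := by
  by_contra h
  rw [Set.not_infinite] at h
  apply b.2
  have hsub : b.1 ⊆ (fun n => 2*n) '' (bp b) ∪ (fun n => 2*n+1) '' (bp b) := by
    intro m hm
    rcases Nat.even_or_odd m with ⟨n, hn⟩ | ⟨n, hn⟩
    · refine Or.inl ⟨n, Or.inl ?_, ?_⟩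
      · rw [show 2*n = m by omega]; exact hm
      · show 2*n = m; omega
    · refine Or.inr ⟨n, Or.inr ?_, ?_⟩
      · rw [show 2*n+1 = m by omega]; exact hm
      · show 2*n+1 = m; omega
  exact ((h.image _).union (h.image _)).subset hsub

noncomputable def en (b : InfSubsetT) : ℕ → ℕ := Nat.nth (· ∈ bp b)

lemma en_mem (b : InfSubsetT) (i : ℕ) : en b i ∈ bp b :=
  Nat.nth_mem_of_infinite (bp_infinite b) i

lemma en_strictMono (b : InfSubsetT) : StrictMono (en b) :=
  Nat.nth_strictMono (bp_infinite b)

noncomputable def FF (b : InfSubsetT) (m N : ℕ) : Finset ℕ := (Finset.Ico m (m+N)).image (en b)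

noncomputable def gg (b : InfSubsetT) (s : Bool) : ℕ → Bool :=
  fun n => xor s (@decide (2*n ∈ b.1) (Classical.propDecidable _))

noncomputable def KK (b : InfSubsetT) (m : ℕ) (s : Bool) : Set ℝ :=
  ⋂ N : ℕ, QQ (FF b m N) (gg b s)

noncomputable def TT (b : InfSubsetT) (j : ℤ) (m : ℕ) (s : Bool) : Set ℝ :=
  (fun x : ℝ => x + (j : ℝ)) ⁻¹' (KK b m s)

lemma isClosed_TT (b : InfSubsetT) (j : ℤ) (m : ℕ) (s : Bool) : IsClosed (TT b j m s) :=
  (isClosed_iInter (fun N => isClosed_QQ _ _)).preimage (continuous_add_right _)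

lemma volume_KK (b : InfSubsetT) (m : ℕ) (s : Bool) : volume (KK b m s) = 0 := by
  have hcard : ∀ N, (FF b m N).card = N := by
    intro N
    rw [FF, Finset.card_image_of_injective _ (en_strictMono b).injective, Nat.card_Ico]
    omega
  have hle : ∀ N, volume (KK b m s) ≤ (2⁻¹ : ℝ≥0∞)^N := by
    intro N
    calc volume (KK b m s) ≤ volume (QQ (FF b m N) (gg b s)) :=
          measure_mono (Set.iInter_subset _ N)
      _ ≤ (2⁻¹ : ℝ≥0∞) ^ (FF b m N).card := volume_QQ_le _ _
      _ = (2⁻¹ : ℝ≥0∞) ^ N := by rw [hcard]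
  refine le_antisymm ?_ zero_le
  exact ge_of_tendsto'
    (ENNReal.tendsto_pow_atTop_nhds_zero_of_lt_one (ENNReal.inv_lt_one.mpr (by norm_num : (1:ℝ≥0∞) < 2))) hle

lemma volume_TT (b : InfSubsetT) (j : ℤ) (m : ℕ) (s : Bool) : volume (TT b j m s) = 0 := by
  rw [TT, measure_preimage_add_right volume _ _, volume_KK]

noncomputable def Fn (b : InfSubsetT) (n : ℕ) : Set ℝ :=
  TT b ((Denumerable.eqv (ℤ × ℕ)).symm n).1 ((Denumerable.eqv (ℤ × ℕ)).symm n).2 true ∪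
  TT b ((Denumerable.eqv (ℤ × ℕ)).symm n).1 ((Denumerable.eqv (ℤ × ℕ)).symm n).2 false

noncomputable def BB (b : InfSubsetT) : Set ℝ := ⋃ n, Fn b n

lemma BB_mem (b : InfSubsetT) : BB b ∈ idealE :=
  ⟨BB b, ⟨Fn b, fun n => (isClosed_TT _ _ _ _).union (isClosed_TT _ _ _ _), rfl⟩,
    MeasureTheory.measure_iUnion_null
      (fun n => measure_union_null (volume_TT _ _ _ _) (volume_TT _ _ _ _)), subset_rfl⟩

lemma capture {x : ℝ} {b : InfSubsetT} (h : SplRel (fx x) b) : x ∈ BB b := by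
  obtain ⟨s, m0, H⟩ : ∃ (s : Bool) (m0 : ℕ), ∀ n ∈ bp b, m0 ≤ n → dgt n x = gg b s n := by
    rcases h with hfin | hfin
    · obtain ⟨m0, hm0⟩ := hfin.bddAbove
      refine ⟨false, m0+1, fun n hn hn' => ?_⟩
      by_cases h2 : 2*n ∈ b.1
      · have hax : 2*n ∈ ax x := by
          by_contra hax
          have : 2*n ∈ b.1 \ (fx x).1 := ⟨h2, hax⟩
          have := hm0 this
          omega
        have hdg := mem_ax_iff_even.mp hax
        simp [gg, hdg, h2]
      · have h3 : 2*n+1 ∈ b.1 := hn.resolve_left h2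
        have hax : 2*n+1 ∈ ax x := by
          by_contra hax
          have : 2*n+1 ∈ b.1 \ (fx x).1 := ⟨h3, hax⟩
          have := hm0 this
          omega
        have hdg := mem_ax_iff_odd.mp hax
        simp [gg, hdg, h2]
    · obtain ⟨m0, hm0⟩ := hfin.bddAbove
      refine ⟨true, m0+1, fun n hn hn' => ?_⟩
      by_cases h2 : 2*n ∈ b.1
      · have hax : 2*n ∉ ax x := by
          intro hax
          have := hm0 (⟨h2, hax⟩ : 2*n ∈ b.1 ∩ (fx x).1)
          omega
        have hdg : dgt n x = false := by
          rcases Bool.dichotomy (dgt n x) with hd | hd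
          · exact hd
          · exact absurd (mem_ax_iff_even.mpr hd) hax
        simp [gg, hdg, h2]
      · have h3 : 2*n+1 ∈ b.1 := hn.resolve_left h2
        have hax : 2*n+1 ∉ ax x := by
          intro hax
          have := hm0 (⟨h3, hax⟩ : 2*n+1 ∈ b.1 ∩ (fx x).1)
          omega
        have hdg : dgt n x = true := by
          rcases Bool.dichotomy (dgt n x) with hd | hd
          · exact absurd (mem_ax_iff_odd.mpr hd) hax
          · exact hd
        simp [gg, hdg, h2]
  set j : ℤ := -⌊x⌋ with hj
  have hxx : x + (j : ℝ) = x - ((⌊x⌋ : ℤ) : ℝ) := by push_cast [hj]; ring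
  have hx'0 : 0 ≤ x + (j : ℝ) := by
    rw [hxx]; linarith [Int.floor_le x]
  have hx'1 : x + (j : ℝ) < 1 := by
    rw [hxx]; linarith [Int.lt_floor_add_one x]
  have hdg : ∀ n, dgt n (x + (j : ℝ)) = dgt n x := by
    intro n; rw [hxx, dgt_sub_int]
  have hKK : x ∈ TT b j m0 s := by
    show x + (j : ℝ) ∈ KK b m0 s
    refine Set.mem_iInter.mpr (fun N => ?_)
    apply mem_QQ hx'0 hx'1
    intro n hn
    rw [hdg]
    simp only [FF, Finset.mem_image, Finset.mem_Ico] at hn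
    obtain ⟨i, ⟨hi1, hi2⟩, rfl⟩ := hn
    exact H _ (en_mem b i) (le_trans hi1 (en_strictMono b).le_apply)
  refine Set.mem_iUnion.mpr ⟨(Denumerable.eqv (ℤ × ℕ)) (j, m0), ?_⟩
  unfold Fn
  rw [Equiv.symm_apply_apply]
  cases s
  · exact Or.inr hKK
  · exact Or.inl hKK

lemma univ_not_mem : (Set.univ : Set ℝ) ∉ idealE := by
  rintro ⟨B, -, hvol, hsub⟩
  rw [Set.eq_univ_of_univ_subset hsub, Real.volume_univ] at hvol
  exact ENNReal.top_ne_zero hvol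

end Stmt19

theorem stmt19 :
    TukeyLE (fun (x : ℝ) (A : idealE) => x ∈ (A : Set ℝ)) SplRel ∧
    bNum SplRel ≤ nonIdeal idealE ∧
    covIdeal idealE ≤ dNum SplRel := by
  refine ⟨⟨Stmt19.fx, fun b => ⟨Stmt19.BB b, Stmt19.BB_mem b⟩, fun x b h => Stmt19.capture h⟩,
    ?_, ?_⟩
  · have hne : { c | ∃ F : Set ℝ, F ∉ idealE ∧ c = #F }.Nonempty :=
      ⟨#(Set.univ : Set ℝ), Set.univ, Stmt19.univ_not_mem, rfl⟩
    obtain ⟨F0, hF0, hEq⟩ := csInf_mem hne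
    rw [show nonIdeal idealE = #F0 from hEq]
    have hunb : RUnbounded SplRel (Stmt19.fx '' F0) := by
      rintro ⟨y, hy⟩
      apply hF0
      obtain ⟨B, hB1, hB2, hB3⟩ := Stmt19.BB_mem y
      exact ⟨B, hB1, hB2,
        fun x hx => hB3 (Stmt19.capture (hy _ (Set.mem_image_of_mem _ hx)))⟩
    calc bNum SplRel ≤ #(Stmt19.fx '' F0) := csInf_le' ⟨_, hunb, rfl⟩
      _ ≤ #F0 := Cardinal.mk_image_le
  · have hne : {c | ∃ E : Set InfSubsetT, RDominating SplRel E ∧ c = #E}.Nonempty :=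
      ⟨#(Set.univ : Set InfSubsetT), Set.univ,
        fun x => ⟨x, Set.mem_univ x, Or.inl (by simp)⟩, rfl⟩
    obtain ⟨D, hD, hEq⟩ := csInf_mem hne
    have hcov : covIdeal idealE ≤ #(Stmt19.BB '' D) := by
      apply csInf_le'
      refine ⟨Stmt19.BB '' D, ?_, ?_, rfl⟩
      · rintro _ ⟨y, -, rfl⟩; exact Stmt19.BB_mem y
      · apply Set.eq_univ_of_forall; intro x
        obtain ⟨y, hyD, hy⟩ := hD (Stmt19.fx x)
        exact Set.mem_sUnion.mpr ⟨Stmt19.BB y, ⟨y, hyD, rfl⟩, Stmt19.capture hy⟩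
    calc covIdeal idealE ≤ #(Stmt19.BB '' D) := hcov
      _ ≤ #D := Cardinal.mk_image_le
      _ = dNum SplRel := hEq.symm
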